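/- Let C be a real constant and let t, t₁, t₂ : J → ℝ be differentiable functions on an open interval J ⊆ ℝ satisfying t₁'(x) = t'(x) + C·exp((t(x)+t₁(x))/2) and t₂'(x) = t₁'(x) + C·exp((t₁(x)+t₂(x))/2) for all x ∈ J. Then the function F(x) = exp((t₁(x)−t(x))/2) + exp((t₁(x)−t₂(x))/2) has zero derivative at every point of J (F is an x-integral of the chain t_{1x} = t_x + C e^{(t+t₁)/2}). -/

import Mathlib

/-- `F = e^{(t₁-t)/2} + e^{(t₁-t₂)/2}` is an x-integral of the
semi-discrete Liouville chain `t_{1x} = t_x + C e^{(t+t₁)/2}`. -/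
theorem stmt_1 (C : ℝ) (J : Set ℝ) (hJ : IsOpen J) (hJc : J.OrdConnected)
    (t t₁ t₂ : ℝ → ℝ)
    (ht : ∀ x ∈ J, DifferentiableAt ℝ t x)
    (ht₁ : ∀ x ∈ J, DifferentiableAt ℝ t₁ x)
    (ht₂ : ∀ x ∈ J, DifferentiableAt ℝ t₂ x)
    (hchain1 : ∀ x ∈ J, deriv t₁ x = deriv t x + C * Real.exp ((t x + t₁ x) / 2))
    (hchain2 : ∀ x ∈ J, deriv t₂ x = deriv t₁ x + C * Real.exp ((t₁ x + t₂ x) / 2)) :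
    ∀ x ∈ J, deriv (fun y => Real.exp ((t₁ y - t y) / 2)
      + Real.exp ((t₁ y - t₂ y) / 2)) x = 0 := by
  intro x hx
  have Ht := (ht x hx).hasDerivAt
  have Ht₁ := (ht₁ x hx).hasDerivAt
  have Ht₂ := (ht₂ x hx).hasDerivAt
  have h1 : HasDerivAt (fun y => Real.exp ((t₁ y - t y) / 2))
      (Real.exp ((t₁ x - t x) / 2) * ((deriv t₁ x - deriv t x) / 2)) x :=
    ((Ht₁.sub Ht).div_const 2).exp
  have h2 : HasDerivAt (fun y => Real.exp ((t₁ y - t₂ y) / 2))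
      (Real.exp ((t₁ x - t₂ x) / 2) * ((deriv t₁ x - deriv t₂ x) / 2)) x :=
    ((Ht₁.sub Ht₂).div_const 2).exp
  rw [(h1.fun_add h2).deriv, hchain2 x hx, hchain1 x hx]
  have e1 : Real.exp ((t₁ x - t x) / 2) * Real.exp ((t x + t₁ x) / 2) = Real.exp (t₁ x) := by
    rw [← Real.exp_add]; ring_nf
  have e2 : Real.exp ((t₁ x - t₂ x) / 2) * Real.exp ((t₁ x + t₂ x) / 2) = Real.exp (t₁ x) := by
    rw [← Real.exp_add]; ring_nf
  linear_combination (C / 2) * e1 - (C / 2) * e2
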